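/- arXiv:2407.15084 — 2 statements merged into one kernel-verified Lean document; each statement's English description precedes it below -/
import Mathlib

section
/- Let p ≥ 2, let Σ ∈ ℝ^{p×p} be symmetric positive semidefinite, and let Σ̂ and Σ̃ be random p×p matrices on a probability space such that almost surely Σ̃ is symmetric positive semidefinite and ‖Σ̃ − Σ̂‖_max ≤ ‖K − Σ̂‖_max for every symmetric positive semidefinite K ∈ ℝ^{p×p}. Let D^p denote the p×(p−1) matrix (I_{p−1}, −1_{p−1})ᵀ, and set Σ̃^p = (D^p)ᵀ Σ̃ D^p, Σ^p = (D^p)ᵀ Σ D^p. Then for every ε > 0, P(‖Σ̃^p − Σ^p‖_max ≥ ε) ≤ p² · max_{k,l ∈ {1,…,p}} P(|Σ̂_{kl} − Σ_{kl}| ≥ ε/8). -/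
open Matrix MeasureTheory
open scoped BigOperators ENNReal

/-- The `p × (p−1)` matrix `D^p = (I_{p−1}, −1_{p−1})ᵀ`. -/
def Dmat (p : ℕ) : Matrix (Fin p) (Fin (p - 1)) ℝ := fun i j =>
  if (i : ℕ) = (j : ℕ) then 1 else if (i : ℕ) = p - 1 then -1 else 0

/-- The entrywise maximum (absolute value) norm of a matrix. -/
noncomputable def maxNorm {m n : Type*} [Fintype m] [Fintype n]
    (M : Matrix m n ℝ) : ℝ :=
  ⨆ i, ⨆ j, |M i j|

lemma abs_le_maxNorm {m n : Type*} [Fintype m] [Fintype n]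
    (M : Matrix m n ℝ) (i : m) (j : n) : |M i j| ≤ maxNorm M := by
  have h1 : |M i j| ≤ ⨆ j, |M i j| :=
    le_ciSup (f := fun j => |M i j|) (Set.Finite.bddAbove (Set.finite_range _)) j
  exact h1.trans (le_ciSup (f := fun i => ⨆ j, |M i j|)
    (Set.Finite.bddAbove (Set.finite_range _)) i)

lemma maxNorm_le {m n : Type*} [Fintype m] [Fintype n] [Nonempty m] [Nonempty n]
    {M : Matrix m n ℝ} {c : ℝ} (h : ∀ i j, |M i j| ≤ c) : maxNorm M ≤ c :=
  ciSup_le fun i => ciSup_le fun j => h i j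

lemma exists_maxNorm_le {m n : Type*} [Fintype m] [Fintype n] [Nonempty m] [Nonempty n]
    (M : Matrix m n ℝ) : ∃ i j, maxNorm M ≤ |M i j| := by
  obtain ⟨b, -, hb⟩ := Finset.exists_max_image (Finset.univ : Finset (m × n))
    (fun x => |M x.1 x.2|) ⟨(Classical.arbitrary m, Classical.arbitrary n), Finset.mem_univ _⟩
  exact ⟨b.1, b.2, maxNorm_le fun i j => hb (i, j) (Finset.mem_univ _)⟩

lemma maxNorm_sub_comm {m n : Type*} [Fintype m] [Fintype n]
    (A B : Matrix m n ℝ) : maxNorm (A - B) = maxNorm (B - A) := by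
  unfold maxNorm
  refine iSup_congr fun i => iSup_congr fun j => ?_
  simp [Matrix.sub_apply, abs_sub_comm]

lemma maxNorm_triangle {m n : Type*} [Fintype m] [Fintype n] [Nonempty m] [Nonempty n]
    (A B C : Matrix m n ℝ) : maxNorm (A - C) ≤ maxNorm (A - B) + maxNorm (B - C) := by
  refine maxNorm_le fun i j => ?_
  have h : (A - C) i j = (A - B) i j + (B - C) i j := by
    simp [Matrix.sub_apply]
  rw [h]
  exact (abs_add_le _ _).trans (add_le_add (abs_le_maxNorm _ i j) (abs_le_maxNorm _ i j))

lemma Dmat_abs_col_sum (p : ℕ) (hp : 2 ≤ p) (j : Fin (p - 1)) :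
    ∑ i : Fin p, |Dmat p i j| = 2 := by
  have hj : (j : ℕ) < p - 1 := j.isLt
  have key : ∀ i : Fin p, |Dmat p i j| =
      (if i = (⟨j, by omega⟩ : Fin p) then (1 : ℝ) else 0) +
      (if i = (⟨p - 1, by omega⟩ : Fin p) then 1 else 0) := by
    intro i
    simp only [Dmat]
    by_cases h1 : (i : ℕ) = (j : ℕ)
    · have e1 : i = (⟨j, by omega⟩ : Fin p) := Fin.ext h1
      have e2 : i ≠ (⟨p - 1, by omega⟩ : Fin p) := by
        simp only [ne_eq, Fin.ext_iff]; omega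
      have h2' : ¬ (j : ℕ) = p - 1 := by omega
      simp [h1, e1, e2, h2']
    · by_cases h2 : (i : ℕ) = p - 1
      · have e1 : i ≠ (⟨j, by omega⟩ : Fin p) := by
          simp only [ne_eq, Fin.ext_iff]; omega
        have e2 : i = (⟨p - 1, by omega⟩ : Fin p) := Fin.ext h2
        have h1' : ¬ p - 1 = (j : ℕ) := by omega
        simp [h1, h2, e1, e2, h1']
      · have e1 : i ≠ (⟨j, by omega⟩ : Fin p) := by
          simp only [ne_eq, Fin.ext_iff]; omega
        have e2 : i ≠ (⟨p - 1, by omega⟩ : Fin p) := by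
          simp only [ne_eq, Fin.ext_iff]; omega
        simp [h1, h2, e1, e2]
  rw [Finset.sum_congr rfl fun i _ => key i, Finset.sum_add_distrib]
  simp
  norm_num

lemma Dmat_entry_bound (p : ℕ) (hp : 2 ≤ p) (M : Matrix (Fin p) (Fin p) ℝ)
    (C : ℝ) (hC0 : 0 ≤ C) (hC : ∀ i l, |M i l| ≤ C) (j k : Fin (p - 1)) :
    |((Dmat p)ᵀ * M * Dmat p) j k| ≤ 4 * C := by
  have expand : ((Dmat p)ᵀ * M * Dmat p) j k
      = ∑ l, (∑ i, Dmat p i j * M i l) * Dmat p l k := by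
    simp [Matrix.mul_apply, Matrix.transpose_apply]
  rw [expand]
  calc |∑ l, (∑ i, Dmat p i j * M i l) * Dmat p l k|
      ≤ ∑ l, |(∑ i, Dmat p i j * M i l) * Dmat p l k| := Finset.abs_sum_le_sum_abs _ _
    _ ≤ ∑ l, (2 * C) * |Dmat p l k| := by
        refine Finset.sum_le_sum fun l _ => ?_
        rw [abs_mul]
        refine mul_le_mul_of_nonneg_right ?_ (abs_nonneg _)
        calc |∑ i, Dmat p i j * M i l| ≤ ∑ i, |Dmat p i j * M i l| :=
              Finset.abs_sum_le_sum_abs _ _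
          _ ≤ ∑ i, |Dmat p i j| * C := by
              refine Finset.sum_le_sum fun i _ => ?_
              rw [abs_mul]
              exact mul_le_mul_of_nonneg_left (hC i l) (abs_nonneg _)
          _ = 2 * C := by rw [← Finset.sum_mul, Dmat_abs_col_sum p hp j]
    _ = (2 * C) * ∑ l, |Dmat p l k| := by rw [Finset.mul_sum]
    _ = 4 * C := by rw [Dmat_abs_col_sum p hp k]; ring

lemma maxNorm_D_conj (p : ℕ) (hp : 2 ≤ p) (M : Matrix (Fin p) (Fin p) ℝ) :
    maxNorm ((Dmat p)ᵀ * M * Dmat p) ≤ 4 * maxNorm M := by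
  haveI : Nonempty (Fin p) := ⟨⟨0, by omega⟩⟩
  haveI : Nonempty (Fin (p - 1)) := ⟨⟨0, by omega⟩⟩
  have hC0 : 0 ≤ maxNorm M :=
    (abs_nonneg _).trans (abs_le_maxNorm M (Classical.arbitrary _) (Classical.arbitrary _))
  exact maxNorm_le fun j k =>
    Dmat_entry_bound p hp M (maxNorm M) hC0 (fun i l => abs_le_maxNorm M i l) j k

/-- If `Σ̃` is (almost surely) the positive semidefinite projection of the random matrix `Σ̂`
in the max norm, and `Σ` is positive semidefinite, then for every `ε > 0`,
`P(‖Σ̃^p − Σ^p‖_max ≥ ε) ≤ p² max_{k,l} P(|Σ̂_{kl} − Σ_{kl}| ≥ ε/8)`, where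
`Σ̃^p = (D^p)ᵀ Σ̃ D^p` and `Σ^p = (D^p)ᵀ Σ D^p`. -/
theorem psd_projection_logratio_tail_bound
    {Ω : Type*} [MeasurableSpace Ω] (μ : Measure Ω) [IsProbabilityMeasure μ]
    (p : ℕ) (hp : 2 ≤ p)
    (Sig : Matrix (Fin p) (Fin p) ℝ) (hSig : Sig.PosSemidef)
    (Sighat Sigtil : Ω → Matrix (Fin p) (Fin p) ℝ)
    (hAS : ∀ᵐ ω ∂μ, (Sigtil ω).PosSemidef ∧
      ∀ K : Matrix (Fin p) (Fin p) ℝ, K.PosSemidef →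
        maxNorm (Sigtil ω - Sighat ω) ≤ maxNorm (K - Sighat ω)) :
    ∀ ε : ℝ, 0 < ε →
      μ {ω | ε ≤ maxNorm ((Dmat p)ᵀ * Sigtil ω * Dmat p - (Dmat p)ᵀ * Sig * Dmat p)}
        ≤ (p : ℝ≥0∞) ^ 2 * ⨆ k : Fin p, ⨆ l : Fin p,
            μ {ω | ε / 8 ≤ |Sighat ω k l - Sig k l|} := by
  intro ε hε
  haveI : Nonempty (Fin p) := ⟨⟨0, by omega⟩⟩
  haveI : Nonempty (Fin (p - 1)) := ⟨⟨0, by omega⟩⟩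
  set A : Fin p × Fin p → Set Ω :=
    fun kl => {ω | ε / 8 ≤ |Sighat ω kl.1 kl.2 - Sig kl.1 kl.2|} with hA
  have hsub : μ {ω | ε ≤ maxNorm ((Dmat p)ᵀ * Sigtil ω * Dmat p - (Dmat p)ᵀ * Sig * Dmat p)}
      ≤ μ (⋃ kl : Fin p × Fin p, A kl) := by
    refine measure_mono_ae ?_
    filter_upwards [hAS] with ω hω hE
    obtain ⟨hpsd, hproj⟩ := hω
    -- rewrite the difference of conjugations
    have hdiff : (Dmat p)ᵀ * Sigtil ω * Dmat p - (Dmat p)ᵀ * Sig * Dmat p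
        = (Dmat p)ᵀ * (Sigtil ω - Sig) * Dmat p := by
      rw [Matrix.mul_sub, Matrix.sub_mul]
    have hE' : ε ≤ maxNorm ((Dmat p)ᵀ * (Sigtil ω - Sig) * Dmat p) := by
      rw [← hdiff]; exact hE
    have h1 : ε ≤ 4 * maxNorm (Sigtil ω - Sig) :=
      hE'.trans (maxNorm_D_conj p hp (Sigtil ω - Sig))
    have h2 : maxNorm (Sigtil ω - Sig)
        ≤ maxNorm (Sigtil ω - Sighat ω) + maxNorm (Sighat ω - Sig) :=
      maxNorm_triangle _ _ _
    have h3 : maxNorm (Sigtil ω - Sighat ω) ≤ maxNorm (Sighat ω - Sig) := by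
      have := hproj Sig hSig
      rwa [maxNorm_sub_comm Sig (Sighat ω)] at this
    have h4 : ε / 8 ≤ maxNorm (Sighat ω - Sig) := by linarith
    obtain ⟨k, l, hkl⟩ := exists_maxNorm_le (Sighat ω - Sig)
    refine Set.mem_iUnion.2 ⟨(k, l), ?_⟩
    have : ε / 8 ≤ |(Sighat ω - Sig) k l| := h4.trans hkl
    simpa [hA, Matrix.sub_apply] using this
  refine hsub.trans ?_
  calc μ (⋃ kl : Fin p × Fin p, A kl)
      ≤ ∑' kl : Fin p × Fin p, μ (A kl) := measure_iUnion_le _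
    _ = ∑ kl : Fin p × Fin p, μ (A kl) := tsum_fintype _
    _ ≤ ∑ _kl : Fin p × Fin p, ⨆ k : Fin p, ⨆ l : Fin p,
          μ {ω | ε / 8 ≤ |Sighat ω k l - Sig k l|} := by
        refine Finset.sum_le_sum fun kl _ => ?_
        exact le_iSup₂ (f := fun k l => μ {ω | ε / 8 ≤ |Sighat ω k l - Sig k l|}) kl.1 kl.2
    _ = (p : ℝ≥0∞) ^ 2 * ⨆ k : Fin p, ⨆ l : Fin p,
          μ {ω | ε / 8 ≤ |Sighat ω k l - Sig k l|} := by
        rw [Finset.sum_const, Finset.card_univ]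
        simp [Fintype.card_prod, Fintype.card_fin, nsmul_eq_mul, sq]
end

section
/- Let n ≥ 1, p > s ≥ 2, and let X ∈ ℝ^{n×p} be a fixed matrix with columns X_1,…,X_p satisfying ‖X_j‖₂² ≤ n for all j. Let S ⊆ {1,…,p} with p ∈ S and |S| = s, let D denote the s×(s−1) matrix (I_{s−1}, −1_{s−1})ᵀ acting on the coordinates of S (with p as the last coordinate of S), and define the n×(s−1) matrix X^p_S whose columns are X_j − X_p for j ∈ S\{p}, and the n×(p−s) matrix X^p_{S^c} whose columns are X_j − X_p for j ∈ S^c. Assume Σ^p_{SS} = (1/n)(X^p_S)ᵀX^p_S is invertible and set Π = I_n − (1/n) X^p_S (Σ^p_{SS})⁻¹ (X^p_S)ᵀ. Let w be a random vector in ℝ^n with independent N(0, σ²) coordinates, σ > 0. Then for every λ > 0 and every ξ ∈ (0,1], P((1/n)‖(X^p_{S^c})ᵀ Π w‖_∞ > λξ/4) ≤ (p−s) · exp(−n λ² ξ² / (128 σ²)). -/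
open Matrix MeasureTheory ProbabilityTheory
open scoped BigOperators ENNReal

section AuxGaussian

open Real Set Filter intervalIntegral

private lemma gpct_gauss_tail_integral {b : ℝ} (hb : 0 < b) {t : ℝ} (ht : 0 ≤ t) :
    ∫ x in Ioi t, Real.exp (-b * x ^ 2)
      ≤ (Real.sqrt (π / b) / 2) * Real.exp (-b * t ^ 2) := by
  set h : ℝ → ℝ := fun x => Real.exp (-b * x ^ 2) with hh
  have hInt : Integrable h := integrable_exp_neg_mul_sq hb
  have hcont : Continuous h := by
    exact Real.continuous_exp.comp (by continuity)
  set c : ℝ := Real.sqrt (π / b) / 2 with hc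
  have hcpos : 0 < c := by
    have : 0 < π / b := div_pos Real.pi_pos hb
    positivity
  have hG0 : ∫ x in Ioi (0:ℝ), h x = c := integral_gaussian_Ioi b
  have hdecomp : ∀ s : ℝ, 0 ≤ s → ∫ x in Ioi s, h x = c - ∫ x in (0:ℝ)..s, h x := by
    intro s hs
    have hu : Ioc 0 s ∪ Ioi s = Ioi (0:ℝ) := Ioc_union_Ioi_eq_Ioi hs
    have hd : Disjoint (Ioc 0 s) (Ioi s) := Ioc_disjoint_Ioi le_rfl
    have := setIntegral_union hd measurableSet_Ioi hInt.integrableOn hInt.integrableOn (f := h)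
    rw [hu] at this
    rw [intervalIntegral.integral_of_le hs]
    rw [hG0] at this
    simp only [hh] at this ⊢
    linarith [this]
  set φ : ℝ → ℝ := fun s => c * Real.exp (-b * s ^ 2) - c + ∫ x in (0:ℝ)..s, h x with hφ
  have hderiv : ∀ s : ℝ, HasDerivAt φ (Real.exp (-b * s ^ 2) * (1 - 2 * b * c * s)) s := by
    intro s
    have h1 : HasDerivAt (fun u : ℝ => -b * u ^ 2) (-b * (2 * s)) s := by
      simpa using (hasDerivAt_pow 2 s).const_mul (-b)
    have h2 : HasDerivAt (fun u : ℝ => Real.exp (-b * u ^ 2))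
        (Real.exp (-b * s ^ 2) * (-b * (2 * s))) s := (Real.hasDerivAt_exp _).comp s h1
    have h3 : HasDerivAt (fun u : ℝ => ∫ x in (0:ℝ)..u, h x) (h s) s := by
      exact intervalIntegral.integral_hasDerivAt_right hInt.intervalIntegrable
        (hcont.stronglyMeasurableAtFilter _ _) hcont.continuousAt
    have := ((h2.const_mul c).sub_const c).add h3
    refine this.congr_deriv ?_
    simp only [hh]
    ring
  have hφcont : Continuous φ := by
    have : Differentiable ℝ φ := fun s => (hderiv s).differentiableAt
    exact this.continuous
  set t₀ : ℝ := 1 / (2 * b * c) with ht₀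
  have hbc : 0 < 2 * b * c := by positivity
  have ht₀pos : 0 < t₀ := by positivity
  have hφ0 : φ 0 = 0 := by simp [hφ]
  have hmono : MonotoneOn φ (Icc 0 t₀) := by
    apply monotoneOn_of_deriv_nonneg (convex_Icc 0 t₀) hφcont.continuousOn
    · intro s hs
      exact (hderiv s).differentiableAt.differentiableWithinAt
    · intro s hs
      rw [(hderiv s).deriv]
      rw [interior_Icc] at hs
      have hs1 : 2 * b * c * s ≤ 1 := by
        have := hs.2.le
        calc 2 * b * c * s ≤ 2 * b * c * t₀ := by nlinarith
        _ = 1 := by rw [ht₀]; field_simp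
      have := Real.exp_pos (-b * s ^ 2)
      nlinarith
  have hanti : AntitoneOn φ (Ici t₀) := by
    apply antitoneOn_of_deriv_nonpos (convex_Ici t₀) hφcont.continuousOn
    · intro s hs
      exact (hderiv s).differentiableAt.differentiableWithinAt
    · intro s hs
      rw [(hderiv s).deriv]
      rw [interior_Ici] at hs
      have hs1 : 1 ≤ 2 * b * c * s := by
        have h1 : 2 * b * c * t₀ = 1 := by rw [ht₀]; field_simp
        have := (lt_of_lt_of_le ht₀pos hs.le)
        nlinarith [(Set.mem_Ioi.mp hs).le]
      have := Real.exp_pos (-b * s ^ 2)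
      nlinarith
  have htend : Tendsto φ atTop (nhds 0) := by
    have h1 : Tendsto (fun s : ℝ => -b * s ^ 2) atTop atBot := by
      have := (tendsto_pow_atTop (two_ne_zero)).const_mul_atTop_of_neg (neg_lt_zero.mpr hb)
      simpa using this
    have h2 : Tendsto (fun s : ℝ => Real.exp (-b * s ^ 2)) atTop (nhds 0) :=
      Real.tendsto_exp_atBot.comp h1
    have h3 : Tendsto (fun s : ℝ => ∫ x in (0:ℝ)..s, h x) atTop (nhds c) := by
      have := intervalIntegral_tendsto_integral_Ioi (0:ℝ) hInt.integrableOn tendsto_id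
      rwa [hG0] at this
    have h4 := ((h2.const_mul c).sub_const c).add h3
    simp only [mul_zero, zero_sub, neg_add_cancel] at h4
    exact h4
  have hφnonneg : ∀ s : ℝ, 0 ≤ s → 0 ≤ φ s := by
    intro s hs
    rcases le_or_gt s t₀ with hst | hst
    · have := hmono (left_mem_Icc.mpr ht₀pos.le) ⟨hs, hst⟩ hs
      rwa [hφ0] at this
    · refine le_of_tendsto htend ?_
      filter_upwards [eventually_ge_atTop s] with u hu
      exact hanti (mem_Ici.mpr hst.le) (mem_Ici.mpr (le_trans hst.le hu)) hu
  have := hφnonneg t ht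
  rw [hdecomp t ht]
  simp only [hφ] at this
  linarith

private lemma gpct_gaussianReal_abs_tail {v : NNReal} (hv : v ≠ 0) {t : ℝ} (ht : 0 < t) :
    gaussianReal 0 v {x : ℝ | t < |x|} ≤ ENNReal.ofReal (Real.exp (-t ^ 2 / (2 * (v:ℝ)))) := by
  have hvpos : (0:ℝ) < (v:ℝ) := by positivity
  rw [gaussianReal_apply_eq_integral 0 hv]
  apply ENNReal.ofReal_le_ofReal
  have hset : {x : ℝ | t < |x|} = Iio (-t) ∪ Ioi t := by
    ext x
    simp only [mem_setOf_eq, mem_union, mem_Iio, mem_Ioi, lt_abs]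
    constructor
    · rintro (h | h); · right; exact h
      · left; linarith
    · rintro (h | h); · right; linarith
      · left; exact h
  have hintg := integrable_gaussianPDFReal 0 v
  have hdisj : Disjoint (Iio (-t)) (Ioi t) :=
    (Iio_disjoint_Ici (by linarith)).mono_right Ioi_subset_Ici_self
  rw [hset, setIntegral_union hdisj measurableSet_Ioi hintg.integrableOn hintg.integrableOn]
  have heven : ∀ x : ℝ, gaussianPDFReal 0 v (-x) = gaussianPDFReal 0 v x := by
    intro x; simp [gaussianPDFReal, neg_sq]
  have hneg : ∫ x in Iio (-t), gaussianPDFReal 0 v x = ∫ x in Ioi t, gaussianPDFReal 0 v x := by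
    rw [← integral_Iic_eq_integral_Iio, ← integral_comp_neg_Ioi]
    simp_rw [heven]
  rw [hneg]
  set b : ℝ := (2 * (v:ℝ))⁻¹ with hb
  have hbpos : 0 < b := by positivity
  have hpdf : ∀ x : ℝ, gaussianPDFReal 0 v x
      = (Real.sqrt (2 * π * v))⁻¹ * Real.exp (-b * x ^ 2) := by
    intro x
    simp only [gaussianPDFReal, sub_zero]
    congr 1
    rw [hb]
    field_simp
  simp_rw [hpdf]
  rw [MeasureTheory.integral_const_mul]
  have hkey := gpct_gauss_tail_integral hbpos ht.le
  have hsqrt : Real.sqrt (π / b) = Real.sqrt (2 * π * v) := by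
    congr 1
    rw [hb]
    field_simp
  rw [hsqrt] at hkey
  have hs2 : (0:ℝ) < Real.sqrt (2 * π * v) := by
    apply Real.sqrt_pos.mpr; positivity
  have hexp : Real.exp (-b * t ^ 2) = Real.exp (-t ^ 2 / (2 * (v:ℝ))) := by
    congr 1
    rw [hb]; field_simp
  rw [← hexp]
  have h1 := mul_le_mul_of_nonneg_left hkey (le_of_lt (inv_pos.mpr hs2))
  have h2 : (Real.sqrt (2*π*v))⁻¹ * (Real.sqrt (2*π*v) / 2 * Real.exp (-b * t^2))
      = Real.exp (-b * t^2) / 2 := by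
    field_simp
  linarith [h1, h2]

private lemma gpct_gaussianPDFReal_mul_eq (v₁ v₂ : NNReal) (h1 : v₁ ≠ 0) (h2 : v₂ ≠ 0) (z x : ℝ) :
    gaussianPDFReal 0 v₁ x * gaussianPDFReal 0 v₂ (z - x)
      = gaussianPDFReal 0 (v₁ + v₂) z
        * gaussianPDFReal ((v₁:ℝ) * z / ((v₁:ℝ) + (v₂:ℝ))) (v₁ * v₂ / (v₁ + v₂)) x := by
  have hv1 : (0:ℝ) < v₁ := by positivity
  have hv2 : (0:ℝ) < v₂ := by positivity
  have hv12 : (0:ℝ) < (v₁:ℝ) + (v₂:ℝ) := by linarith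
  have hcoe : ((v₁ * v₂ / (v₁ + v₂) : NNReal) : ℝ) = (v₁:ℝ) * v₂ / ((v₁:ℝ) + v₂) := by
    push_cast; ring
  simp only [gaussianPDFReal, sub_zero, hcoe, NNReal.coe_add]
  rw [mul_mul_mul_comm, mul_mul_mul_comm ((Real.sqrt (2*π*((v₁:ℝ)+v₂)))⁻¹)]
  congr 1
  · rw [← mul_inv, ← mul_inv, ← Real.sqrt_mul (by positivity), ← Real.sqrt_mul (by positivity)]
    congr 2
    field_simp
  · rw [← Real.exp_add, ← Real.exp_add]
    congr 1
    field_simp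
    ring

private lemma gpct_lintegral_gaussianPDF_conv (v₁ v₂ : NNReal) (h1 : v₁ ≠ 0) (h2 : v₂ ≠ 0)
    (z : ℝ) :
    ∫⁻ x, gaussianPDF 0 v₁ x * gaussianPDF 0 v₂ (z - x) = gaussianPDF 0 (v₁ + v₂) z := by
  have hvstar : v₁ * v₂ / (v₁ + v₂) ≠ 0 := by
    positivity
  have hpt : ∀ x : ℝ, gaussianPDFReal 0 v₁ x * gaussianPDFReal 0 v₂ (z - x)
      = gaussianPDFReal 0 (v₁ + v₂) z
        * gaussianPDFReal ((v₁:ℝ) * z / ((v₁:ℝ) + (v₂:ℝ))) (v₁ * v₂ / (v₁ + v₂)) x :=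
    gpct_gaussianPDFReal_mul_eq v₁ v₂ h1 h2 z
  have hInt : Integrable (fun x => gaussianPDFReal 0 v₁ x * gaussianPDFReal 0 v₂ (z - x)) := by
    simp_rw [hpt]
    exact (integrable_gaussianPDFReal _ _).const_mul _
  have hnn : 0 ≤ᵐ[volume] fun x => gaussianPDFReal 0 v₁ x * gaussianPDFReal 0 v₂ (z - x) :=
    ae_of_all _ fun x => mul_nonneg (gaussianPDFReal_nonneg _ _ _) (gaussianPDFReal_nonneg _ _ _)
  have hofReal : ∀ x : ℝ, gaussianPDF 0 v₁ x * gaussianPDF 0 v₂ (z - x)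
      = ENNReal.ofReal (gaussianPDFReal 0 v₁ x * gaussianPDFReal 0 v₂ (z - x)) := by
    intro x
    rw [gaussianPDF, gaussianPDF, ← ENNReal.ofReal_mul (gaussianPDFReal_nonneg _ _ _)]
  simp_rw [hofReal]
  rw [← ofReal_integral_eq_lintegral_ofReal hInt hnn]
  have : ∫ x, gaussianPDFReal 0 v₁ x * gaussianPDFReal 0 v₂ (z - x)
      = gaussianPDFReal 0 (v₁ + v₂) z := by
    simp_rw [hpt]
    rw [MeasureTheory.integral_const_mul, integral_gaussianPDFReal_eq_one _ hvstar, mul_one]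
  rw [this, gaussianPDF]

private lemma gpct_gaussianReal_conv (v₁ v₂ : NNReal) (h1 : v₁ ≠ 0) (h2 : v₂ ≠ 0) :
    Measure.map (fun q : ℝ × ℝ => q.1 + q.2) ((gaussianReal 0 v₁).prod (gaussianReal 0 v₂))
      = gaussianReal 0 (v₁ + v₂) := by
  have h12 : v₁ + v₂ ≠ 0 := by positivity
  have hmadd : Measurable fun q : ℝ × ℝ => q.1 + q.2 := measurable_fst.add measurable_snd
  haveI : IsProbabilityMeasure ((gaussianReal 0 v₁).prod (gaussianReal 0 v₂)) := by infer_instance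
  haveI : IsProbabilityMeasure
      (Measure.map (fun q : ℝ × ℝ => q.1 + q.2) ((gaussianReal 0 v₁).prod (gaussianReal 0 v₂))) :=
    Measure.isProbabilityMeasure_map hmadd.aemeasurable
  refine Measure.ext_of_Iic _ _ (fun a => ?_)
  rw [Measure.map_apply hmadd measurableSet_Iic]
  have hs : MeasurableSet ((fun q : ℝ × ℝ => q.1 + q.2) ⁻¹' Iic a) := hmadd measurableSet_Iic
  rw [Measure.prod_apply hs]
  have hinner : ∀ x : ℝ, gaussianReal 0 v₂ (Prod.mk x ⁻¹' ((fun q : ℝ × ℝ => q.1 + q.2) ⁻¹' Iic a))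
      = ∫⁻ z, gaussianPDF 0 v₂ (z - x) * (Iic a).indicator 1 z := by
    intro x
    have hpre : Prod.mk x ⁻¹' ((fun q : ℝ × ℝ => q.1 + q.2) ⁻¹' Iic a) = Iic (a - x) := by
      ext y; simp [le_sub_iff_add_le, add_comm]
    rw [hpre, gaussianReal_apply 0 h2, ← lintegral_indicator measurableSet_Iic _]
    have hfun : ∀ y : ℝ, (Iic (a-x)).indicator (gaussianPDF 0 v₂) y
        = (fun z => gaussianPDF 0 v₂ (z - x) * (Iic a).indicator 1 z) (y + x) := by
      intro y
      simp only [indicator, mem_Iic, add_sub_cancel_right, Pi.one_apply]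
      by_cases hy : y ≤ a - x
      · rw [if_pos hy, if_pos (by linarith), mul_one]
      · rw [if_neg hy, if_neg (by intro h; exact hy (by linarith)), mul_zero]
    simp_rw [hfun]
    exact lintegral_add_right_eq_self
      (fun z => gaussianPDF 0 v₂ (z - x) * (Iic a).indicator 1 z) x
  simp_rw [hinner]
  rw [gaussianReal_of_var_ne_zero 0 h1]
  rw [lintegral_withDensity_eq_lintegral_mul _ (measurable_gaussianPDF 0 v₁)]
  swap
  · apply Measurable.lintegral_prod_right
      (f := fun x z => gaussianPDF 0 v₂ (z - x) * (Iic a).indicator 1 z)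
    exact ((measurable_gaussianPDF 0 v₂).comp (measurable_snd.sub measurable_fst)).mul
      ((measurable_one.indicator measurableSet_Iic).comp measurable_snd)
  simp only [Pi.mul_apply]
  have hswap : ∫⁻ x, gaussianPDF 0 v₁ x * ∫⁻ z, gaussianPDF 0 v₂ (z - x) * (Iic a).indicator 1 z
      = ∫⁻ z, (∫⁻ x, gaussianPDF 0 v₁ x * gaussianPDF 0 v₂ (z - x)) * (Iic a).indicator 1 z := by
    have hmeas : Measurable (Function.uncurry
        (fun x z => gaussianPDF 0 v₁ x * (gaussianPDF 0 v₂ (z - x) * (Iic a).indicator 1 z))) := by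
      apply Measurable.mul
      · exact (measurable_gaussianPDF 0 v₁).comp measurable_fst
      · exact ((measurable_gaussianPDF 0 v₂).comp (measurable_snd.sub measurable_fst)).mul
          ((measurable_one.indicator measurableSet_Iic).comp measurable_snd)
    calc ∫⁻ x, gaussianPDF 0 v₁ x * ∫⁻ z, gaussianPDF 0 v₂ (z - x) * (Iic a).indicator 1 z
        = ∫⁻ x, ∫⁻ z, gaussianPDF 0 v₁ x * (gaussianPDF 0 v₂ (z - x) * (Iic a).indicator 1 z) := by
          congr 1; funext x
          rw [lintegral_const_mul]
          exact ((measurable_gaussianPDF 0 v₂).comp (measurable_id.sub measurable_const)).mul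
            (measurable_one.indicator measurableSet_Iic)
      _ = ∫⁻ z, ∫⁻ x, gaussianPDF 0 v₁ x * (gaussianPDF 0 v₂ (z - x) * (Iic a).indicator 1 z) :=
          lintegral_lintegral_swap hmeas.aemeasurable
      _ = ∫⁻ z, (∫⁻ x, gaussianPDF 0 v₁ x * gaussianPDF 0 v₂ (z - x)) * (Iic a).indicator 1 z := by
          congr 1; funext z
          rw [← lintegral_mul_const]
          · simp_rw [mul_assoc]
          · exact (measurable_gaussianPDF 0 v₁).mul
              ((measurable_gaussianPDF 0 v₂).comp (measurable_const.sub measurable_id))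
  rw [hswap]
  have hptconv : ∀ z : ℝ,
      (∫⁻ x, gaussianPDF 0 v₁ x * gaussianPDF 0 v₂ (z - x)) * (Iic a).indicator 1 z
      = gaussianPDF 0 (v₁ + v₂) z * (Iic a).indicator 1 z := by
    intro z
    rw [gpct_lintegral_gaussianPDF_conv v₁ v₂ h1 h2 z]
  simp_rw [hptconv]
  have hind : ∫⁻ z, gaussianPDF 0 (v₁ + v₂) z * (Iic a).indicator 1 z
      = ∫⁻ z in Iic a, gaussianPDF 0 (v₁ + v₂) z := by
    rw [← lintegral_indicator measurableSet_Iic _]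
    congr 1; funext z
    simp only [indicator, mem_Iic, Pi.one_apply]
    by_cases hz : z ≤ a
    · rw [if_pos hz, if_pos hz, mul_one]
    · rw [if_neg hz, if_neg hz, mul_zero]
  rw [hind, ← gaussianReal_apply 0 h12]

variable {Ω : Type*} [MeasurableSpace Ω]

private lemma gpct_ae_eq_zero_of_map_dirac {X : Ω → ℝ} {μ : Measure Ω} (hXm : AEMeasurable X μ)
    (hX : μ.map X = Measure.dirac 0) : X =ᵐ[μ] 0 := by
  have h : μ (X ⁻¹' ({0}ᶜ)) = 0 := by
    rw [← Measure.map_apply_of_aemeasurable hXm (MeasurableSet.compl (measurableSet_singleton 0)),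
      hX, Measure.dirac_apply' _ (MeasurableSet.compl (measurableSet_singleton 0))]
    simp
  rw [Filter.EventuallyEq, ae_iff]
  convert h using 2
  ext ω; simp

private lemma gpct_map_add_gaussianReal {μ : Measure Ω} [IsProbabilityMeasure μ] {X Y : Ω → ℝ}
    (hXm : AEMeasurable X μ) (hYm : AEMeasurable Y μ) (hindep : IndepFun X Y μ)
    {v₁ v₂ : NNReal} (hX : μ.map X = gaussianReal 0 v₁) (hY : μ.map Y = gaussianReal 0 v₂) :
    μ.map (fun ω => X ω + Y ω) = gaussianReal 0 (v₁ + v₂) := by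
  by_cases h1 : v₁ = 0
  · subst h1
    rw [gaussianReal_zero_var] at hX
    have hX0 := gpct_ae_eq_zero_of_map_dirac hXm hX
    have : (fun ω => X ω + Y ω) =ᵐ[μ] Y := by
      filter_upwards [hX0] with ω hω
      simp [hω]
    rw [Measure.map_congr this, hY, zero_add]
  by_cases h2 : v₂ = 0
  · subst h2
    rw [gaussianReal_zero_var] at hY
    have hY0 := gpct_ae_eq_zero_of_map_dirac hYm hY
    have : (fun ω => X ω + Y ω) =ᵐ[μ] X := by
      filter_upwards [hY0] with ω hω
      simp [hω]
    rw [Measure.map_congr this, hX, add_zero]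
  have hpair : AEMeasurable (fun ω => (X ω, Y ω)) μ := hXm.prodMk hYm
  have hcomp : (fun ω => X ω + Y ω) = (fun q : ℝ × ℝ => q.1 + q.2) ∘ (fun ω => (X ω, Y ω)) := rfl
  rw [hcomp, ← AEMeasurable.map_map_of_aemeasurable
      (g := fun q : ℝ × ℝ => q.1 + q.2) (measurable_fst.add measurable_snd).aemeasurable hpair,
    (indepFun_iff_map_prod_eq_prod_map_map hXm hYm).mp hindep, hX, hY,
    gpct_gaussianReal_conv v₁ v₂ h1 h2]

private lemma gpct_map_weighted_sum_gaussianReal {μ : Measure Ω} [IsProbabilityMeasure μ] {n : ℕ}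
    {w : Fin n → Ω → ℝ} (hmeas : ∀ i, Measurable (w i))
    (hindep : iIndepFun w μ) {v : NNReal}
    (hgauss : ∀ i, μ.map (w i) = gaussianReal 0 v) (c : Fin n → ℝ) (s : Finset (Fin n)) :
    μ.map (fun ω => ∑ i ∈ s, c i * w i ω)
      = gaussianReal 0 (Real.toNNReal (∑ i ∈ s, (c i) ^ 2) * v) := by
  classical
  induction s using Finset.induction_on with
  | empty =>
      simp only [Finset.sum_empty, Real.toNNReal_zero, zero_mul, gaussianReal_zero_var]
      rw [Measure.map_const]
      simp
  | @insert j s hj ih =>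
      have hf_meas : ∀ i, Measurable (fun ω => c i * w i ω) :=
        fun i => (hmeas i).const_mul _
      have hiid : iIndepFun (fun i (ω : Ω) => c i * w i ω) μ := by
        have := hindep.comp (fun i (x : ℝ) => c i * x) (fun i => measurable_const_mul (c i))
        exact this
      have hIndep : IndepFun (∑ i ∈ s, fun ω => c i * w i ω) (fun ω => c j * w j ω) μ :=
        hiid.indepFun_finsetSum_of_notMem hf_meas hj
      have hsum_eq : (∑ i ∈ s, fun ω => c i * w i ω) = fun ω => ∑ i ∈ s, c i * w i ω := by
        funext ω; simp [Finset.sum_apply]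
      rw [hsum_eq] at hIndep
      have hlawj : μ.map (fun ω => c j * w j ω) = gaussianReal 0 (⟨(c j)^2, sq_nonneg _⟩ * v) := by
        have hcj : (fun ω => c j * w j ω) = (fun x => c j * x) ∘ w j := rfl
        rw [hcj, ← Measure.map_map (measurable_const_mul (c j)) (hmeas j), hgauss j,
          gaussianReal_map_const_mul]
        simp
        rfl
      have hsum_meas : AEMeasurable (fun ω => ∑ i ∈ s, c i * w i ω) μ :=
        (Finset.measurable_sum s (fun i _ => hf_meas i)).aemeasurable
      have hres := gpct_map_add_gaussianReal hsum_meas ((hf_meas j).aemeasurable) hIndep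
        ih hlawj
      have hgoal_eq : (fun ω => ∑ i ∈ insert j s, c i * w i ω)
          = fun ω => (∑ i ∈ s, c i * w i ω) + c j * w j ω := by
        funext ω
        rw [Finset.sum_insert hj]
        ring
      rw [hgoal_eq, hres]
      congr 1
      have hnn1 : 0 ≤ ∑ i ∈ s, (c i)^2 := Finset.sum_nonneg fun i _ => sq_nonneg _
      ext : 1
      push_cast [Real.coe_toNNReal _ hnn1,
        Real.coe_toNNReal _ (Finset.sum_nonneg fun (i : Fin n) _ => sq_nonneg (c i))]
      rw [Finset.sum_insert hj]
      show (∑ i ∈ s, c i ^ 2) * (v:ℝ) + c j ^ 2 * (v:ℝ) = _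
      ring

private lemma gpct_iIndepFun_ae_congr {μ : Measure Ω} {ι : Type*}
    [Countable ι] {f g : ι → Ω → ℝ}
    (h : iIndepFun f μ) (heq : ∀ i, f i =ᵐ[μ] g i) :
    iIndepFun g μ := by
  rw [iIndepFun_iff_measure_inter_preimage_eq_mul] at h ⊢
  intro S sets H
  have hae : ∀ᵐ ω ∂μ, ∀ i, f i ω = g i ω := by
    rw [ae_all_iff]
    exact heq
  have h1 : μ (⋂ i ∈ S, g i ⁻¹' sets i) = μ (⋂ i ∈ S, f i ⁻¹' sets i) := by
    apply measure_congr
    apply Filter.eventuallyEq_set.mpr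
    filter_upwards [hae] with ω hω
    simp only [Set.mem_iInter, Set.mem_preimage]
    constructor
    · intro hg k hk; rw [hω k]; exact hg k hk
    · intro hf k hk; rw [← hω k]; exact hf k hk
  have h2 : ∀ i ∈ S, μ (g i ⁻¹' sets i) = μ (f i ⁻¹' sets i) := by
    intro i hi
    apply measure_congr
    apply Filter.eventuallyEq_set.mpr
    filter_upwards [heq i] with ω hω
    simp only [Set.mem_preimage]
    rw [hω]
  rw [h1, Finset.prod_congr rfl h2]
  exact h S H

end AuxGaussian

section AuxMatrix

private lemma gpct_proj_contract {n : ℕ} (Pi : Matrix (Fin n) (Fin n) ℝ) (hsym : Piᵀ = Pi)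
    (hidem : Pi * Pi = Pi) (u : Fin n → ℝ) :
    ∑ i, (Pi.mulVec u i) ^ 2 ≤ ∑ i, (u i) ^ 2 := by
  set r := Pi.mulVec u with hr
  have hrr : r ⬝ᵥ r = r ⬝ᵥ u := by
    calc r ⬝ᵥ r = r ⬝ᵥ Pi.mulVec u := rfl
      _ = Pi.vecMul r ⬝ᵥ u := dotProduct_mulVec r Pi u
      _ = r ⬝ᵥ u := by
          have hv : Pi.vecMul r = Piᵀ.mulVec r := by rw [← vecMul_transpose, transpose_transpose]
          rw [hv, hsym, hr, mulVec_mulVec, hidem]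
  have hCS := Finset.sum_mul_sq_le_sq_mul_sq Finset.univ r u
  have hdot : r ⬝ᵥ r = ∑ i, (r i) ^ 2 := by
    simp [dotProduct, sq]
  have hdot2 : r ⬝ᵥ u = ∑ i, r i * u i := rfl
  have hrnn : 0 ≤ ∑ i, (r i) ^ 2 := Finset.sum_nonneg fun i _ => sq_nonneg _
  have hunn : 0 ≤ ∑ i, (u i) ^ 2 := Finset.sum_nonneg fun i _ => sq_nonneg _
  nlinarith [hCS, hrr, hdot, hdot2, hrnn, hunn]

private lemma gpct_pi_sym_idem {n : ℕ} {ι : Type*} [Fintype ι] [DecidableEq ι] (hn : 1 ≤ n)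
    (XpS : Matrix (Fin n) ι ℝ) (SigpSS : Matrix ι ι ℝ)
    (hSigpSS : SigpSS = (1 / (n : ℝ)) • (XpSᵀ * XpS)) (hinv : IsUnit SigpSS.det)
    (Pi : Matrix (Fin n) (Fin n) ℝ)
    (hPi : Pi = 1 - (1 / (n : ℝ)) • (XpS * SigpSS⁻¹ * XpSᵀ)) :
    Piᵀ = Pi ∧ Pi * Pi = Pi := by
  have hnne : (n : ℝ) ≠ 0 := by positivity
  have hsymS : SigpSSᵀ = SigpSS := by
    rw [hSigpSS, Matrix.transpose_smul, Matrix.transpose_mul, Matrix.transpose_transpose]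
  have hsyminv : (SigpSS⁻¹)ᵀ = SigpSS⁻¹ := by
    rw [Matrix.transpose_nonsing_inv, hsymS]
  constructor
  · rw [hPi, Matrix.transpose_sub, Matrix.transpose_one, Matrix.transpose_smul,
      Matrix.transpose_mul, Matrix.transpose_mul, Matrix.transpose_transpose, hsyminv,
      Matrix.mul_assoc]
  · have hXX : XpSᵀ * XpS = (n : ℝ) • SigpSS := by
      rw [hSigpSS, smul_smul, mul_one_div_cancel hnne, one_smul]
    set A := XpS * SigpSS⁻¹ * XpSᵀ with hA
    have hAA : A * A = (n : ℝ) • A := by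
      calc A * A = XpS * SigpSS⁻¹ * (XpSᵀ * XpS) * SigpSS⁻¹ * XpSᵀ := by
            rw [hA]; simp only [Matrix.mul_assoc]
        _ = XpS * SigpSS⁻¹ * ((n : ℝ) • SigpSS) * SigpSS⁻¹ * XpSᵀ := by rw [hXX]
        _ = (n : ℝ) • (XpS * (SigpSS⁻¹ * SigpSS * SigpSS⁻¹) * XpSᵀ) := by
            rw [Matrix.mul_smul, Matrix.smul_mul, Matrix.smul_mul]
            simp only [Matrix.mul_assoc]
        _ = (n : ℝ) • A := by
            rw [Matrix.nonsing_inv_mul _ hinv, Matrix.one_mul, hA]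
    rw [hPi]
    rw [sub_mul, mul_sub, mul_sub, Matrix.one_mul, Matrix.mul_one]
    simp only [Matrix.smul_mul, Matrix.mul_smul, smul_smul, hAA]
    have hc2 : 1 / (n:ℝ) * (1 / (n:ℝ) * (n:ℝ)) = 1 / (n:ℝ) := by field_simp
    rw [hc2, Matrix.one_mul]
    abel

end AuxMatrix

/-- Gaussian tail bound for the out-of-support log-ratio columns correlated with the projected
noise: with `Π = I − (1/n) X^p_S (Σ^p_SS)⁻¹ (X^p_S)ᵀ` and i.i.d. `N(0,σ²)` noise `w`,
`P((1/n)‖(X^p_{S^c})ᵀ Π w‖_∞ > λξ/4) ≤ (p−s) exp(−n λ² ξ² / (128 σ²))`. -/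
theorem gaussian_projected_correlation_tail
    {Ω : Type*} [MeasurableSpace Ω] (μ : Measure Ω) [IsProbabilityMeasure μ]
    (n p s : ℕ) (hn : 1 ≤ n) (hs : 2 ≤ s) (hsp : s < p)
    (X : Matrix (Fin n) (Fin p) ℝ)
    (hX : ∀ j : Fin p, ∑ i, (X i j) ^ 2 ≤ (n : ℝ))
    (plast : Fin p) (hplast : (plast : ℕ) = p - 1)
    (S : Finset (Fin p)) (hpS : plast ∈ S) (hcard : S.card = s)
    -- the matrix of log-ratio columns `X_j − X_p` for `j ∈ S \ {p}`
    (XpS : Matrix (Fin n) ↥(S.erase plast) ℝ)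
    (hXpS : ∀ i j, XpS i j = X i j.1 - X i plast)
    -- the matrix of log-ratio columns `X_j − X_p` for `j ∈ S^c`
    (XpSc : Matrix (Fin n) {j : Fin p // j ∉ S} ℝ)
    (hXpSc : ∀ i j, XpSc i j = X i j.1 - X i plast)
    (SigpSS : Matrix ↥(S.erase plast) ↥(S.erase plast) ℝ)
    (hSigpSS : SigpSS = (1 / (n : ℝ)) • (XpSᵀ * XpS))
    (hinv : IsUnit SigpSS.det)
    (Pi : Matrix (Fin n) (Fin n) ℝ)
    (hPi : Pi = 1 - (1 / (n : ℝ)) • (XpS * SigpSS⁻¹ * XpSᵀ))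
    (σ : ℝ) (hσ : 0 < σ)
    (w : Fin n → Ω → ℝ)
    (hindep : iIndepFun w μ)
    (hgauss : ∀ i : Fin n, μ.map (w i) = gaussianReal 0 (Real.toNNReal (σ ^ 2))) :
    ∀ lam : ℝ, 0 < lam → ∀ ξ : ℝ, 0 < ξ → ξ ≤ 1 →
      μ {ω | lam * ξ / 4 <
          (1 / (n : ℝ)) * ⨆ j : {j : Fin p // j ∉ S},
            |(XpScᵀ * Pi).mulVec (fun i => w i ω) j|}
        ≤ ENNReal.ofReal
            (((p : ℝ) - (s : ℝ)) * Real.exp (-(n * lam ^ 2 * ξ ^ 2) / (128 * σ ^ 2))) := by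
  intro lam hlam ξ hξ hξ1
  classical
  have hn0 : (0:ℝ) < n := by
    have : 0 < n := hn
    exact_mod_cast this
  -- a.e.-measurable modifications of the noise
  have hwae : ∀ i, AEMeasurable (w i) μ := fun i => by
    apply aemeasurable_of_map_neZero
    rw [hgauss i]
    infer_instance
  set W : Fin n → Ω → ℝ := fun i => (hwae i).mk (w i) with hWdef
  have hWmeas : ∀ i, Measurable (W i) := fun i => (hwae i).measurable_mk
  have hWeq : ∀ i, w i =ᵐ[μ] W i := fun i => (hwae i).ae_eq_mk
  have hWgauss : ∀ i, μ.map (W i) = gaussianReal 0 (Real.toNNReal (σ ^ 2)) := fun i => by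
    rw [← Measure.map_congr (hWeq i)]; exact hgauss i
  have hWindep : iIndepFun W μ := gpct_iIndepFun_ae_congr hindep hWeq
  -- matrix facts
  obtain ⟨hsym, hidem⟩ := gpct_pi_sym_idem hn XpS SigpSS hSigpSS hinv Pi hPi
  have hsym' : ∀ a b, Pi a b = Pi b a := fun a b => congrFun (congrFun hsym b) a
  have hrow : ∀ (j : {j : Fin p // j ∉ S}) (i : Fin n),
      (XpScᵀ * Pi) j i = Pi.mulVec (fun k => XpSc k j) i := by
    intro j i
    simp only [Matrix.mul_apply, Matrix.transpose_apply, Matrix.mulVec, dotProduct]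
    refine Finset.sum_congr rfl fun k _ => ?_
    rw [hsym' i k]; ring
  have hcolbound : ∀ (j : {j : Fin p // j ∉ S}),
      ∑ k, (XpSc k j) ^ 2 ≤ 4 * (n:ℝ) := by
    intro j
    have h1 : ∀ k, (XpSc k j) ^ 2 ≤ 2 * (X k j.1)^2 + 2 * (X k plast)^2 := by
      intro k; rw [hXpSc k j]; nlinarith [sq_nonneg (X k j.1 + X k plast)]
    calc ∑ k, (XpSc k j)^2 ≤ ∑ k, (2*(X k j.1)^2 + 2*(X k plast)^2) :=
          Finset.sum_le_sum (fun k _ => h1 k)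
      _ = 2 * (∑ k, (X k j.1)^2) + 2 * (∑ k, (X k plast)^2) := by
          rw [Finset.sum_add_distrib, Finset.mul_sum, Finset.mul_sum]
      _ ≤ 2 * (n:ℝ) + 2 * (n:ℝ) := by
          have h2 := hX j.1
          have h3 := hX plast
          nlinarith
      _ = 4 * (n:ℝ) := by ring
  have hrowbound : ∀ (j : {j : Fin p // j ∉ S}),
      ∑ i, ((XpScᵀ * Pi) j i)^2 ≤ 4 * (n:ℝ) := by
    intro j
    calc ∑ i, ((XpScᵀ * Pi) j i)^2 = ∑ i, (Pi.mulVec (fun k => XpSc k j) i)^2 :=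
          Finset.sum_congr rfl fun i _ => by rw [hrow j i]
      _ ≤ ∑ k, (XpSc k j)^2 := gpct_proj_contract Pi hsym hidem _
      _ ≤ 4 * (n:ℝ) := hcolbound j
  -- laws of the linear statistics
  set v2 : NNReal := Real.toNNReal (σ^2) with hv2def
  have hv2 : (v2:ℝ) = σ^2 := Real.coe_toNNReal _ (sq_nonneg σ)
  set c : {j : Fin p // j ∉ S} → Fin n → ℝ := fun j i => (XpScᵀ * Pi) j i with hcdef
  set Y : {j : Fin p // j ∉ S} → Ω → ℝ := fun j ω => ∑ i, c j i * W i ω with hYdef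
  have hYmeas : ∀ j, Measurable (Y j) :=
    fun j => Finset.measurable_sum _ (fun i _ => (hWmeas i).const_mul _)
  have hYlaw : ∀ j, μ.map (Y j) = gaussianReal 0 (Real.toNNReal (∑ i, (c j i)^2) * v2) :=
    fun j => gpct_map_weighted_sum_gaussianReal hWmeas hWindep hWgauss (c j) Finset.univ
  -- replace `w` by `W` in the event
  set T : ℝ := (n:ℝ) * (lam * ξ / 4) with hT
  have hTpos : 0 < T := by positivity
  have hEcongr : μ {ω | lam * ξ / 4 <
        (1/(n:ℝ)) * ⨆ j : {j : Fin p // j ∉ S}, |(XpScᵀ*Pi).mulVec (fun i => w i ω) j|}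
      = μ {ω | lam * ξ / 4 <
        (1/(n:ℝ)) * ⨆ j : {j : Fin p // j ∉ S}, |(XpScᵀ*Pi).mulVec (fun i => W i ω) j|} := by
    apply measure_congr
    apply Filter.eventuallyEq_set.mpr
    have hae : ∀ᵐ ω ∂μ, ∀ i, w i ω = W i ω := ae_all_iff.mpr hWeq
    filter_upwards [hae] with ω hω
    have hfun : (fun i => w i ω) = (fun i => W i ω) := funext hω
    simp only [Set.mem_setOf_eq, hfun]
  rw [hEcongr]
  -- nonemptiness of the complement
  haveI hne : Nonempty {j : Fin p // j ∉ S} := by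
    by_contra h
    simp only [not_nonempty_iff] at h
    have hall : ∀ j : Fin p, j ∈ S := fun j => by
      by_contra hj
      exact h.false ⟨j, hj⟩
    have huniv := Finset.eq_univ_iff_forall.mpr hall
    rw [huniv, Finset.card_univ, Fintype.card_fin] at hcard
    omega
  -- event inclusion into the union
  have hsub : {ω | lam * ξ / 4 <
        (1/(n:ℝ)) * ⨆ j : {j : Fin p // j ∉ S}, |(XpScᵀ*Pi).mulVec (fun i => W i ω) j|}
      ⊆ ⋃ j : {j : Fin p // j ∉ S}, {ω | T < |Y j ω|} := by
    intro ω hω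
    simp only [Set.mem_setOf_eq] at hω
    have hbdd : BddAbove (Set.range fun j : {j : Fin p // j ∉ S} =>
        |(XpScᵀ*Pi).mulVec (fun i => W i ω) j|) := (Set.finite_range _).bddAbove
    have hlt : T < ⨆ j : {j : Fin p // j ∉ S}, |(XpScᵀ*Pi).mulVec (fun i => W i ω) j| := by
      have h2 := mul_lt_mul_of_pos_left hω hn0
      rw [hT]
      calc (n:ℝ) * (lam * ξ / 4) < (n:ℝ) * ((1/(n:ℝ))
            * ⨆ j : {j : Fin p // j ∉ S}, |(XpScᵀ*Pi).mulVec (fun i => W i ω) j|) := h2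
        _ = ⨆ j : {j : Fin p // j ∉ S}, |(XpScᵀ*Pi).mulVec (fun i => W i ω) j| := by
            rw [← mul_assoc]
            rw [mul_one_div, div_self (ne_of_gt hn0), one_mul]
    rw [lt_ciSup_iff hbdd] at hlt
    obtain ⟨j, hj⟩ := hlt
    refine Set.mem_iUnion.mpr ⟨j, ?_⟩
    simp only [Set.mem_setOf_eq]
    have : (XpScᵀ*Pi).mulVec (fun i => W i ω) j = Y j ω := by
      simp only [hYdef, hcdef, Matrix.mulVec, dotProduct]
    rwa [this] at hj
  -- per-coordinate tail bound
  have hjbound : ∀ j : {j : Fin p // j ∉ S}, μ {ω | T < |Y j ω|}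
      ≤ ENNReal.ofReal (Real.exp (-((n:ℝ) * lam^2 * ξ^2) / (128 * σ^2))) := by
    intro j
    have hsetm : MeasurableSet {x : ℝ | T < |x|} :=
      measurableSet_lt measurable_const continuous_abs.measurable
    have hpre : {ω | T < |Y j ω|} = Y j ⁻¹' {x | T < |x|} := rfl
    rw [hpre, ← Measure.map_apply (hYmeas j) hsetm, hYlaw j]
    set V : NNReal := Real.toNNReal (∑ i, (c j i)^2) * v2 with hVdef
    have hVcoe : (V:ℝ) = (∑ i, (c j i)^2) * σ^2 := by
      rw [hVdef]
      push_cast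
      rw [Real.coe_toNNReal _ (Finset.sum_nonneg fun i _ => sq_nonneg _), hv2]
    have hVle : (V:ℝ) ≤ 4 * (n:ℝ) * σ^2 := by
      rw [hVcoe]
      have := hrowbound j
      nlinarith [sq_nonneg σ]
    by_cases hV0 : V = 0
    · rw [hV0, gaussianReal_zero_var, Measure.dirac_apply' _ hsetm]
      have h0 : (0:ℝ) ∉ {x : ℝ | T < |x|} := by
        simp only [Set.mem_setOf_eq, abs_zero]
        linarith
      rw [Set.indicator_of_notMem h0]
      exact zero_le
    · refine le_trans (gpct_gaussianReal_abs_tail hV0 hTpos) ?_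
      apply ENNReal.ofReal_le_ofReal
      apply Real.exp_le_exp.mpr
      have hVpos : (0:ℝ) < V := by
        have : V ≠ 0 := hV0
        positivity
      rw [neg_div, neg_div, neg_le_neg_iff]
      rw [div_le_div_iff₀ (by positivity) (by positivity)]
      have hT2 : T^2 = (n:ℝ)^2 * lam^2 * ξ^2 / 16 := by
        rw [hT]; ring
      nlinarith [hVle, hVpos, mul_pos (mul_pos hn0 (mul_pos hlam hlam)) (mul_pos hξ hξ),
        sq_nonneg (lam * ξ), mul_pos hn0 hn0]
  -- union bound and counting
  have hcardc : Fintype.card {j : Fin p // j ∉ S} = p - s := by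
    calc Fintype.card {j : Fin p // j ∉ S}
        = Fintype.card (Fin p) - Fintype.card {j : Fin p // j ∈ S} :=
          Fintype.card_subtype_compl _
      _ = p - s := by rw [Fintype.card_fin, Fintype.card_coe, hcard]
  calc μ {ω | lam * ξ / 4 <
        (1/(n:ℝ)) * ⨆ j : {j : Fin p // j ∉ S}, |(XpScᵀ*Pi).mulVec (fun i => W i ω) j|}
      ≤ μ (⋃ j : {j : Fin p // j ∉ S}, {ω | T < |Y j ω|}) := measure_mono hsub
    _ ≤ ∑ j : {j : Fin p // j ∉ S}, μ {ω | T < |Y j ω|} := measure_iUnion_fintype_le _ _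
    _ ≤ ∑ _j : {j : Fin p // j ∉ S},
          ENNReal.ofReal (Real.exp (-((n:ℝ) * lam^2 * ξ^2) / (128 * σ^2))) :=
        Finset.sum_le_sum fun j _ => hjbound j
    _ = (p - s : ℕ) • ENNReal.ofReal (Real.exp (-((n:ℝ) * lam^2 * ξ^2) / (128 * σ^2))) := by
        rw [Finset.sum_const, Finset.card_univ, hcardc]
    _ = ENNReal.ofReal (((p:ℝ) - (s:ℝ)) * Real.exp (-((n:ℝ) * lam^2 * ξ^2) / (128 * σ^2))) := by
        rw [nsmul_eq_mul, ← ENNReal.ofReal_natCast (p - s),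
          ← ENNReal.ofReal_mul (Nat.cast_nonneg _)]
        congr 2
        rw [Nat.cast_sub hsp.le]
end
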